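/- Let D ∈ ℝ^{n×n} be a symmetric matrix with D_ii = 0 and 0 ≤ D_ij ≤ 1 for all i,j, which is of strictly negative type (v^T D v < 0 for every nonzero v ∈ ℝ^n with Σ_i v_i = 0), and suppose the all-ones vector 1 is an eigenvector of D, i.e. D·1 = λ·1 for some real λ. Then the matrix Z = 1·1^T − D (i.e. Z_ij = 1 − D_ij) is positive definite: x^T Z x > 0 for every nonzero x ∈ ℝ^n. -/

import Mathlib

open Matrix Finset

/-- for a rescaled distance matrix `D` of strictly negative type whose
all-ones vector is an eigenvector, `Z = 𝟙𝟙ᵀ − D` is positive definite. -/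
theorem one_sub_dist_posDef {n : ℕ} (D : Matrix (Fin n) (Fin n) ℝ)
    (hsymm : Dᵀ = D) (hdiag : ∀ i, D i i = 0)
    (hrange : ∀ i j, 0 ≤ D i j ∧ D i j ≤ 1)
    (hneg : ∀ v : Fin n → ℝ, v ≠ 0 → (∑ i, v i) = 0 → v ⬝ᵥ D.mulVec v < 0)
    (lam : ℝ) (heig : D.mulVec (fun _ => 1) = fun _ => lam) :
    ∀ x : Fin n → ℝ, x ≠ 0 →
      0 < x ⬝ᵥ (Matrix.of fun i j => 1 - D i j).mulVec x := by
  intro x hx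
  have hn : 0 < n := by
    rcases Nat.eq_zero_or_pos n with h | h
    · exact absurd (funext fun i => absurd i.isLt (by omega)) hx
    · exact h
  have hn' : (0:ℝ) < n := by exact_mod_cast hn
  set s : ℝ := ∑ i, x i with hs
  set c : ℝ := s / n with hc
  set v : Fin n → ℝ := fun i => x i - c with hv
  have hvsum : ∑ i, v i = 0 := by
    simp only [hv, Finset.sum_sub_distrib, Finset.sum_const, Finset.card_univ,
      Fintype.card_fin, nsmul_eq_mul, hc, ← hs]
    field_simp
    ring
  have hxeq : x = v + c • (fun _ => (1:ℝ)) := by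
    funext i; simp [hv]
  have hsym : ∀ a b : Fin n → ℝ, a ⬝ᵥ D.mulVec b = b ⬝ᵥ D.mulVec a := by
    intro a b
    rw [Matrix.dotProduct_mulVec, ← Matrix.mulVec_transpose, hsymm, dotProduct_comm]
  have hone : ∀ w : Fin n → ℝ, (∑ i, w i) = 0 → w ⬝ᵥ D.mulVec (fun _ => 1) = 0 := by
    intro w hw
    rw [heig]
    simp only [dotProduct, mul_comm, ← Finset.mul_sum, hw, mul_zero]
  have h11 : (fun _ => (1:ℝ)) ⬝ᵥ D.mulVec (fun _ => 1) = n * lam := by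
    rw [heig]; simp [dotProduct, Finset.card_univ]
  have hZ : x ⬝ᵥ (Matrix.of fun i j => 1 - D i j).mulVec x = s^2 - x ⬝ᵥ D.mulVec x := by
    simp only [dotProduct, Matrix.mulVec, Matrix.of_apply, sub_mul, one_mul,
      Finset.sum_sub_distrib, mul_sub, Finset.mul_sum, ← hs]
    rw [← Finset.sum_mul]
    rw [← hs]
    ring_nf
  have hDx : x ⬝ᵥ D.mulVec x = v ⬝ᵥ D.mulVec v + c^2 * (n * lam) := by
    rw [hxeq]
    rw [Matrix.mulVec_add, Matrix.mulVec_smul, add_dotProduct, dotProduct_add,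
      dotProduct_add, smul_dotProduct, dotProduct_smul, dotProduct_smul,
      hone v hvsum, hsym (fun _ => (1:ℝ)) v, hone v hvsum, smul_dotProduct, h11]
    simp; ring
  have hlam : lam < n := by
    obtain ⟨i⟩ : Nonempty (Fin n) := Fin.pos_iff_nonempty.mp hn
    have h1 : lam = ∑ j, D i j := by
      have := congrFun heig i
      simp [Matrix.mulVec, dotProduct] at this
      linarith [this]
    have h2 : ∑ j, D i j < ∑ _j : Fin n, (1:ℝ) :=
      Finset.sum_lt_sum (fun j _ => (hrange i j).2)
        ⟨i, Finset.mem_univ i, by rw [hdiag]; norm_num⟩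
    simpa [h1, Finset.card_univ] using h2
  rw [hZ, hDx]
  have hcn : c * n = s := by rw [hc, div_mul_cancel₀ s hn'.ne']
  by_cases hvz : v = 0
  · have hsne : s ≠ 0 := by
      intro h0
      apply hx
      have hc0 : c = 0 := by simp [hc, h0]
      funext i
      have := congrFun hvz i
      simp [hv, hc0] at this
      simpa using this
    have hvDv : v ⬝ᵥ D.mulVec v = 0 := by simp [hvz]
    rw [hvDv]
    have : c ≠ 0 := by
      intro h0; apply hsne; rw [← hcn, h0, zero_mul]
    have hs2 : s^2 = c^2 * (n:ℝ)^2 := by rw [← hcn]; ring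
    nlinarith [mul_pos (mul_pos (mul_self_pos.mpr this) hn') (sub_pos.mpr hlam)]
  · have hvDv := hneg v hvz hvsum
    have hs2 : s^2 = c^2 * (n:ℝ)^2 := by rw [← hcn]; ring
    nlinarith [mul_nonneg (sq_nonneg c) (mul_pos hn' (sub_pos.mpr hlam)).le]
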